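/- Let A be a group containing a subgroup H of finite index. If H (as a group in its own right) is equationally Artinian, then A is equationally Artinian. -/
import Mathlib


/-- The Diophantine radical `Rad_H(E)` of a subset `E ⊆ Hⁿ` (coefficients from `H` itself). -/
def RadH (H : Type*) [Group H] {n : ℕ} (E : Set (Fin n → H)) :
    Set (Monoid.Coprod H (FreeGroup (Fin n))) :=
  {w | ∀ e ∈ E, Monoid.Coprod.lift (MonoidHom.id H) (FreeGroup.lift e) w = 1}

/-- A group is equationally Artinian (Diophantine sense). -/
def EquationallyArtinian (H : Type*) [Group H] : Prop :=
  ∀ (n : ℕ) (E : Set (Fin n → H)), ∃ E₀ ⊆ E, E₀.Finite ∧ RadH H E₀ = RadH H E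

namespace EqArtAux

variable {G : Type*} [Group G]

/-- Evaluation of a word at a tuple. -/
def ev {ι : Type*} (e : ι → G) : Monoid.Coprod G (FreeGroup ι) →* G :=
  Monoid.Coprod.lift (MonoidHom.id G) (FreeGroup.lift e)

def Rad {ι : Type*} (E : Set (ι → G)) : Set (Monoid.Coprod G (FreeGroup ι)) :=
  {w | ∀ e ∈ E, ev e w = 1}

theorem Rad_mono {ι : Type*} {D E : Set (ι → G)} (h : D ⊆ E) : Rad E ⊆ Rad D :=
  fun _ hw e he => hw e (h he)

theorem Rad_iUnion {ι κ : Type*} (s : κ → Set (ι → G)) :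
    Rad (⋃ c, s c) = ⋂ c, Rad (s c) := by
  ext w
  simp only [Rad, Set.mem_iInter, Set.mem_setOf_eq, Set.mem_iUnion]
  exact ⟨fun h c e he => h e ⟨c, he⟩, fun h e ⟨c, he⟩ => h c e he⟩

theorem exists_finite_preimage {α β : Type*} {f : α → β} {s : Set α} {t : Set β}
    (ht : t.Finite) (h : t ⊆ f '' s) : ∃ u ⊆ s, u.Finite ∧ f '' u = t := by
  have hh : ∀ y : t, ∃ x, x ∈ s ∧ f x = (y : β) := fun ⟨y, hy⟩ => h hy
  choose g hg1 hg2 using hh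
  have : Finite t := ht.to_subtype
  refine ⟨Set.range g, Set.range_subset_iff.2 hg1, Set.finite_range g, ?_⟩
  ext y
  constructor
  · rintro ⟨x, ⟨z, rfl⟩, rfl⟩
    rw [hg2]; exact z.2
  · intro hy
    exact ⟨g ⟨y, hy⟩, ⟨⟨y, hy⟩, rfl⟩, hg2 _⟩

/-- Master transfer lemma. -/
theorem transfer {G' : Type*} [Group G'] {ι ι' : Type*}
    (j : Monoid.Coprod G (FreeGroup ι) →* Monoid.Coprod G' (FreeGroup ι'))
    (t : (ι → G) → (ι' → G'))
    (hiff : ∀ (e : ι → G) w, ev e w = 1 ↔ ev (t e) (j w) = 1)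
    (E : Set (ι → G))
    (h : ∃ E₀ ⊆ t '' E, E₀.Finite ∧ Rad E₀ = Rad (t '' E)) :
    ∃ E₀ ⊆ E, E₀.Finite ∧ Rad E₀ = Rad E := by
  have key : ∀ D : Set (ι → G), Rad D = j ⁻¹' Rad (t '' D) := by
    intro D
    ext w
    simp only [Rad, Set.mem_preimage, Set.mem_setOf_eq, Set.forall_mem_image]
    exact forall₂_congr fun e _ => hiff e w
  obtain ⟨E₀, hsub, hfin, hrad⟩ := h
  obtain ⟨D₀, hD₀E, hD₀fin, hD₀im⟩ := exists_finite_preimage hfin hsub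
  exact ⟨D₀, hD₀E, hD₀fin, by rw [key D₀, hD₀im, hrad, ← key E]⟩




theorem eqArt_iff {H : Type*} [Group H] : EquationallyArtinian H ↔
    ∀ (n : ℕ) (E : Set (Fin n → H)), ∃ E₀ ⊆ E, E₀.Finite ∧ Rad E₀ = Rad E :=
  Iff.rfl

theorem eqArt_of_le {A : Type*} [Group A] {K H : Subgroup A} (hle : K ≤ H)
    (hH : EquationallyArtinian H) : EquationallyArtinian K := by
  rw [eqArt_iff] at hH ⊢
  intro n E
  refine transfer (Monoid.Coprod.map (Subgroup.inclusion hle) (MonoidHom.id _))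
    (fun e i => Subgroup.inclusion hle (e i)) ?_ E (hH n _)
  intro e w
  have hcomp : (ev (fun i => Subgroup.inclusion hle (e i))).comp
      (Monoid.Coprod.map (Subgroup.inclusion hle) (MonoidHom.id _))
      = (Subgroup.inclusion hle).comp (ev e) := by
    apply Monoid.Coprod.hom_ext
    · ext κ
      simp [ev, Monoid.Coprod.map_apply_inl]
    · apply FreeGroup.ext_hom
      intro i
      simp [ev, Monoid.Coprod.map_apply_inr]
  have hval := DFunLike.congr_fun hcomp w
  simp only [MonoidHom.comp_apply] at hval
  simp only [hval]
  exact ⟨fun h => by rw [h, map_one],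
    fun h => Subgroup.inclusion_injective hle (by rw [h, map_one])⟩

theorem eqArt_pi (hG : EquationallyArtinian G) {ι : Type*} [Finite ι]
    (E : Set (ι → G)) : ∃ E₀ ⊆ E, E₀.Finite ∧ Rad E₀ = Rad E := by
  rw [eqArt_iff] at hG
  obtain ⟨N, ⟨σ⟩⟩ := Finite.exists_equiv_fin ι
  refine transfer (Monoid.Coprod.map (MonoidHom.id G) (FreeGroup.map σ))
    (fun e => e ∘ σ.symm) ?_ E (hG N _)
  intro e w
  have hcomp : (ev (e ∘ σ.symm)).comp (Monoid.Coprod.map (MonoidHom.id G) (FreeGroup.map σ))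
      = ev e := by
    apply Monoid.Coprod.hom_ext
    · ext a
      simp [ev, Monoid.Coprod.map_apply_inl]
    · apply FreeGroup.ext_hom
      intro i
      simp [ev, Monoid.Coprod.map_apply_inr]
  have hval := DFunLike.congr_fun hcomp w
  simp only [MonoidHom.comp_apply] at hval
  simp only [hval]


section Main

variable {A : Type*} [Group A] (K : Subgroup A) [K.Normal]

open Monoid.Coprod

open Classical in
noncomputable def T (q : A ⧸ K) : A := if q = 1 then 1 else Quotient.out q

lemma mk_T (q : A ⧸ K) : ((T K q : A) : A ⧸ K) = q := by
  by_cases h : q = 1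
  · subst h; simp [T]
  · simp [T, h, QuotientGroup.out_eq']

lemma T_one : T K (1 : A ⧸ K) = 1 := by simp [T]

lemma d_mem (a : A) (q : A ⧸ K) : a * T K q * (T K (↑a * q))⁻¹ ∈ K := by
  have h1 : ((a * T K q : A) : A ⧸ K) = ↑a * q := by
    rw [QuotientGroup.mk_mul, mk_T]
  have h2 : ((T K (↑a * q) : A) : A ⧸ K) = ↑a * q := mk_T K _
  have h3 : (T K (↑a * q))⁻¹ * (a * T K q) ∈ K :=
    QuotientGroup.eq.mp (h2.trans h1.symm)
  have h4 := Subgroup.Normal.conj_mem ‹K.Normal› _ h3 (T K (↑a * q))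
  simpa [mul_assoc] using h4

/-- The `K`-valued "cocycle" of the section `T`. -/
noncomputable def d (a : A) (q : A ⧸ K) : K := ⟨a * T K q * (T K (↑a * q))⁻¹, d_mem K a q⟩

lemma d_coe (a : A) (q : A ⧸ K) : ((d K a q : K) : A) = a * T K q * (T K (↑a * q))⁻¹ := rfl

variable (n : ℕ)

/-- `P K n` is the coproduct of `K` with the free group on `Fin n × (A ⧸ K)`. -/
abbrev P := Monoid.Coprod (↥K) (FreeGroup (Fin n × (A ⧸ K)))

/-- The action (as an endomorphism for now) of `a : A` on `P K n`. -/
noncomputable def α (a : A) : P K n →* P K n :=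
  Monoid.Coprod.lift
    ((inl : ↥K →* P K n).comp (MulAut.conjNormal a).toMonoidHom)
    (FreeGroup.lift fun p => inl (d K a p.2) * inr (FreeGroup.of (p.1, ↑a * p.2)) *
      (inl (d K a p.2))⁻¹)

lemma α_inl (a : A) (κ : K) : α K n a (inl κ) = inl (MulAut.conjNormal a κ) := by
  simp [α]

lemma α_of (a : A) (p : Fin n × (A ⧸ K)) :
    α K n a (inr (FreeGroup.of p)) =
      inl (d K a p.2) * inr (FreeGroup.of (p.1, ↑a * p.2)) * (inl (d K a p.2))⁻¹ := by
  simp [α]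

lemma d_cocycle (a b : A) (q : A ⧸ K) :
    MulAut.conjNormal a (d K b q) * d K a (↑b * q) = d K (a * b) q := by
  have hq : ((a * b : A) : A ⧸ K) * q = ↑a * (↑b * q) := by
    rw [QuotientGroup.mk_mul, mul_assoc]
  ext
  simp only [d, MulAut.conjNormal_apply, Subgroup.coe_mul, hq]
  group

lemma d_one (q : A ⧸ K) : d K 1 q = 1 := by
  ext
  simp [d]

lemma α_comp (a b : A) : (α K n a).comp (α K n b) = α K n (a * b) := by
  apply Monoid.Coprod.hom_ext
  · ext κ
    simp [α_inl, map_mul, MulAut.mul_apply]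
  · apply FreeGroup.ext_hom
    intro p
    have hq : ((a * b : A) : A ⧸ K) * p.2 = ↑a * (↑b * p.2) := by
      rw [QuotientGroup.mk_mul, mul_assoc]
    simp only [MonoidHom.comp_apply, α_of, map_mul, map_inv, α_inl, α_of]
    rw [← d_cocycle]
    simp [hq, map_mul, mul_assoc]

lemma α_one : α K n 1 = MonoidHom.id (P K n) := by
  apply Monoid.Coprod.hom_ext
  · ext κ
    simp [α_inl]
  · apply FreeGroup.ext_hom
    intro p
    simp [α_of, d_one]

/-- The action of `A` on `P K n`. -/
noncomputable def φ : A →* MulAut (P K n) where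
  toFun a :=
    { toFun := α K n a
      invFun := α K n a⁻¹
      left_inv := fun p => by
        rw [← MonoidHom.comp_apply, α_comp, inv_mul_cancel, α_one, MonoidHom.id_apply]
      right_inv := fun p => by
        rw [← MonoidHom.comp_apply, α_comp, mul_inv_cancel, α_one, MonoidHom.id_apply]
      map_mul' := map_mul _ }
  map_one' := by
    apply MulEquiv.ext
    intro p
    simp [α_one]
  map_mul' a b := by
    apply MulEquiv.ext
    intro p
    have := DFunLike.congr_fun (α_comp K n a b) p
    simpa [MulAut.mul_apply] using this.symm

lemma φ_apply (a : A) : ⇑(φ K n a) = ⇑(α K n a) := rfl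

/-- The encoding homomorphism. -/
noncomputable def Λ : Monoid.Coprod A (FreeGroup (Fin n)) →* (P K n) ⋊[φ K n] A :=
  Monoid.Coprod.lift SemidirectProduct.inr
    (FreeGroup.lift fun i =>
      SemidirectProduct.inl (Monoid.Coprod.inr (FreeGroup.of (i, (1 : A ⧸ K)))))

/-- The tuple of conjugated values. -/
noncomputable def Θ (k : Fin n → K) : Fin n × (A ⧸ K) → K := fun p =>
  ⟨T K p.2 * (k p.1 : A) * (T K p.2)⁻¹,
    Subgroup.Normal.conj_mem ‹K.Normal› _ (k p.1).2 (T K p.2)⟩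

lemma Θ_coe (k : Fin n → K) (p : Fin n × (A ⧸ K)) :
    ((Θ K n k p : K) : A) = T K p.2 * (k p.1 : A) * (T K p.2)⁻¹ := rfl

lemma compat (k : Fin n → K) (a : A) :
    (K.subtype.comp (ev (Θ K n k))).comp ((φ K n a).toMonoidHom) =
      (MulAut.conj a).toMonoidHom.comp (K.subtype.comp (ev (Θ K n k))) := by
  apply Monoid.Coprod.hom_ext
  · ext κ
    simp [ev, φ_apply, α_inl, MulAut.conjNormal_apply, MulAut.conj_apply]
  · apply FreeGroup.ext_hom
    intro p
    have h1 : ((T K (↑a * p.2) : A) : A ⧸ K) = ↑a * p.2 := mk_T K _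
    simp only [MonoidHom.comp_apply, MulEquiv.coe_toMonoidHom, φ_apply, α_of,
      map_mul, map_inv, MulAut.conj_apply]
    simp only [ev, Monoid.Coprod.lift_apply_inl, Monoid.Coprod.lift_apply_inr,
      FreeGroup.lift_apply_of, MonoidHom.id_apply, d_coe, Θ_coe, Subgroup.coe_subtype,
      MulAut.conjNormal_apply]
    group

/-- The evaluation homomorphism on the semidirect product. -/
noncomputable def ε (k : Fin n → K) : (P K n) ⋊[φ K n] A →* A :=
  SemidirectProduct.lift (K.subtype.comp (ev (Θ K n k))) (MonoidHom.id A) (compat K n k)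

lemma key (k : Fin n → K) :
    (ε K n k).comp (Λ K n) = ev (fun i => (k i : A)) := by
  apply Monoid.Coprod.hom_ext
  · ext a
    simp [Λ, ε, ev]
  · apply FreeGroup.ext_hom
    intro i
    simp [Λ, ε, ev, Θ, T_one]

lemma eval_formula (k : Fin n → K) (w : Monoid.Coprod A (FreeGroup (Fin n))) :
    ev (fun i => (k i : A)) w =
      (ev (Θ K n k) ((Λ K n w).left) : A) * (Λ K n w).right := by
  have h := DFunLike.congr_fun (key K n k) w
  rw [← h, MonoidHom.comp_apply, ← SemidirectProduct.inl_left_mul_inr_right (Λ K n w),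
    map_mul]
  simp [ε]


theorem main_step [K.FiniteIndex] (hK : EquationallyArtinian ↥K) (D : Set (Fin n → ↥K)) :
    ∃ D₀ ⊆ D, D₀.Finite ∧
      Rad ((fun k (i : Fin n) => ((k i : A))) '' D₀) =
        Rad ((fun k (i : Fin n) => ((k i : A))) '' D) := by
  classical
  rcases D.eq_empty_or_nonempty with hD | ⟨kstar, hkstar⟩
  · exact ⟨∅, by simp, Set.finite_empty, by rw [hD]⟩
  obtain ⟨E₀, hE₀sub, hE₀fin, hE₀rad⟩ := eqArt_pi hK (Θ K n '' D)
  have hE₁sub : insert (Θ K n kstar) E₀ ⊆ Θ K n '' D :=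
    Set.insert_subset (Set.mem_image_of_mem _ hkstar) hE₀sub
  have hE₁rad : Rad (insert (Θ K n kstar) E₀) = Rad (Θ K n '' D) :=
    subset_antisymm (hE₀rad ▸ Rad_mono (Set.subset_insert _ _)) (Rad_mono hE₁sub)
  obtain ⟨D₀, hD₀D, hD₀fin, hD₀im⟩ := exists_finite_preimage (hE₀fin.insert _) hE₁sub
  have hne : D₀.Nonempty := by
    have h : Θ K n kstar ∈ Θ K n '' D₀ := hD₀im ▸ Set.mem_insert _ _
    obtain ⟨k₀, hk₀, -⟩ := h
    exact ⟨k₀, hk₀⟩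
  refine ⟨D₀, hD₀D, hD₀fin, subset_antisymm ?_ (Rad_mono (Set.image_mono hD₀D))⟩
  intro w hw
  obtain ⟨k₀, hk₀⟩ := hne
  have h₀ : ev (fun i => ((k₀ i : A))) w = 1 := hw _ (Set.mem_image_of_mem _ hk₀)
  rw [eval_formula] at h₀
  have hr : (Λ K n w).right ∈ K := by
    have h1 : (Λ K n w).right = ((ev (Θ K n k₀) ((Λ K n w).left) : K) : A)⁻¹ :=
      eq_inv_of_mul_eq_one_right h₀
    rw [h1]
    exact K.inv_mem (SetLike.coe_mem _)
  set wK : P K n := (Λ K n w).left * Monoid.Coprod.inl (⟨(Λ K n w).right, hr⟩ : ↥K) with hwK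
  have hwKval : ∀ k : Fin n → ↥K, ((ev (Θ K n k) wK : K) : A) =
      ((ev (Θ K n k) ((Λ K n w).left) : K) : A) * (Λ K n w).right := by
    intro k
    rw [hwK, map_mul]
    simp [ev]
  have hwKmem : ∀ k ∈ D₀, ev (Θ K n k) wK = 1 := by
    intro k hk
    have h1 : ev (fun i => ((k i : A))) w = 1 := hw _ (Set.mem_image_of_mem _ hk)
    rw [eval_formula] at h1
    have h2 : ((ev (Θ K n k) wK : K) : A) = 1 := (hwKval k).trans h1
    exact OneMemClass.coe_eq_one.mp h2
  have hwKrad : wK ∈ Rad (Θ K n '' D) := by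
    rw [← hE₁rad, ← hD₀im]
    rintro e ⟨k, hk, rfl⟩
    exact hwKmem k hk
  rintro e ⟨k, hk, rfl⟩
  show ev (fun i => ((k i : A))) w = 1
  rw [eval_formula]
  have h2 := hwKrad _ (Set.mem_image_of_mem _ hk)
  have h3 : ((ev (Θ K n k) wK : K) : A) = 1 := by rw [h2]; rfl
  rw [hwKval] at h3
  exact h3

end Main
end EqArtAux

open EqArtAux in
/-- A group with an equationally Artinian subgroup of finite index is equationally Artinian. -/
theorem finiteIndex_equationallyArtinian {A : Type*} [Group A]
    (H : Subgroup A) [H.FiniteIndex] (hH : EquationallyArtinian H) :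
    EquationallyArtinian A := by
  classical
  rw [eqArt_iff]
  intro n E
  set K := H.normalCore with hKdef
  have hKart : EquationallyArtinian ↥K := eqArt_of_le H.normalCore_le hH
  have hc : ∀ c : Fin n → A ⧸ K,
      ∃ E₀ ⊆ {e ∈ E | ∀ i, ((e i : A) : A ⧸ K) = c i}, E₀.Finite ∧
        Rad E₀ = Rad {e ∈ E | ∀ i, ((e i : A) : A ⧸ K) = c i} := by
    intro c
    set Ec : Set (Fin n → A) := {e ∈ E | ∀ i, ((e i : A) : A ⧸ K) = c i} with hEc
    refine transfer (Monoid.Coprod.lift Monoid.Coprod.inl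
        (FreeGroup.lift fun i => Monoid.Coprod.inl (T K (c i)) *
          Monoid.Coprod.inr (FreeGroup.of i)))
      (fun e i => (T K (c i))⁻¹ * e i) ?_ Ec ?_
    · intro e w
      have hcomp : (ev (fun i => (T K (c i))⁻¹ * e i)).comp
          (Monoid.Coprod.lift Monoid.Coprod.inl
            (FreeGroup.lift fun i => Monoid.Coprod.inl (T K (c i)) *
              Monoid.Coprod.inr (FreeGroup.of i))) = ev e := by
        apply Monoid.Coprod.hom_ext
        · ext a
          simp [ev]
        · apply FreeGroup.ext_hom
          intro i
          simp [ev]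
      have hval := DFunLike.congr_fun hcomp w
      simp only [MonoidHom.comp_apply] at hval
      simp only [hval]
    · have him : (fun k (i : Fin n) => ((k i : A))) ''
          {k : Fin n → ↥K | (fun i => ((k i : A))) ∈ (fun e (i : Fin n) => (T K (c i))⁻¹ * e i) '' Ec}
          = (fun e (i : Fin n) => (T K (c i))⁻¹ * e i) '' Ec := by
        apply subset_antisymm
        · rintro x ⟨k, hk, rfl⟩
          exact hk
        · rintro x hx
          have hmem : ∀ i, x i ∈ K := by
            intro i
            obtain ⟨e, he, rfl⟩ := hx
            have h1 : (((T K (c i))⁻¹ * e i : A) : A ⧸ K) = 1 := by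
              rw [QuotientGroup.mk_mul, QuotientGroup.mk_inv, mk_T, (he.2 i : _)]
              simp
            exact (QuotientGroup.eq_one_iff _).mp h1
          refine ⟨fun i => ⟨x i, hmem i⟩, ?_, rfl⟩
          exact hx
      obtain ⟨D₀, hD₀, hfin, hrad⟩ := main_step K n hKart _
      exact ⟨(fun k (i : Fin n) => ((k i : A))) '' D₀,
        by rw [← him]; exact Set.image_mono hD₀, hfin.image _, by rw [hrad, him]⟩
  choose F hFsub hFfin hFrad using hc
  refine ⟨⋃ c, F c, ?_, ?_, ?_⟩
  · exact Set.iUnion_subset fun c => (hFsub c).trans (Set.sep_subset _ _)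
  · exact Set.finite_iUnion hFfin
  · have hE : E = ⋃ c : Fin n → A ⧸ K, {e ∈ E | ∀ i, ((e i : A) : A ⧸ K) = c i} := by
      ext e
      simp only [Set.mem_iUnion, Set.mem_setOf_eq]
      exact ⟨fun he => ⟨fun i => ((e i : A) : A ⧸ K), he, fun i => rfl⟩, fun ⟨c, he, _⟩ => he⟩
    rw [Rad_iUnion]
    conv_rhs => rw [hE]
    rw [Rad_iUnion]
    exact Set.iInter_congr fun c => hFrad c
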